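/- arXiv:0807.0142 — 2 statements merged into one kernel-verified Lean document; each statement's English description precedes it below -/
import Mathlib

section
/- Let φ be an element of the integral closure of the ideal 𝔞^ν in the ring of germs of holomorphic functions at 0 ∈ ℂⁿ, where 𝔞 is generated by f₁,…,f_m. Then there exists a constant C > 0 and a neighborhood U of 0 such that |φ(z)| ≤ C·(|f₁(z)| + ⋯ + |f_m(z)|)^ν for all z ∈ U. -/
/-!
STATEMENT 1: If φ is in the integral closure of 𝔞^ν, where 𝔞 = (f₁,…,f_m) ⊆ 𝒪₀,
then |φ(z)| ≤ C (|f₁(z)| + ⋯ + |f_m(z)|)^ν near 0.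
-/

noncomputable section
open Filter Metric

/-- The ring of germs at `0 ∈ ℂⁿ` of holomorphic functions. -/
def HoloGerm (n : ℕ) : Subring (Filter.Germ (nhds (0 : Fin n → ℂ)) ℂ) where
  carrier := {φ | ∃ f : (Fin n → ℂ) → ℂ, AnalyticAt ℂ f 0 ∧ φ = ↑f}
  mul_mem' := by rintro a b ⟨f, hf, rfl⟩ ⟨g, hg, rfl⟩; exact ⟨f * g, hf.mul hg, rfl⟩
  one_mem' := ⟨1, analyticAt_const, rfl⟩
  add_mem' := by rintro a b ⟨f, hf, rfl⟩ ⟨g, hg, rfl⟩; exact ⟨f + g, hf.add hg, rfl⟩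
  zero_mem' := ⟨0, analyticAt_const, rfl⟩
  neg_mem' := by rintro a ⟨f, hf, rfl⟩; exact ⟨-f, hf.neg, rfl⟩

/-- Integral dependence of `φ` over the ideal `I`. -/
def IsIntegralOverIdeal {R : Type*} [CommRing R] (I : Ideal R) (φ : R) : Prop :=
  ∃ N : ℕ, 0 < N ∧ ∃ a : ℕ → R,
    (∀ k, 1 ≤ k → k ≤ N → a k ∈ I ^ k) ∧
    φ ^ N + ∑ k ∈ Finset.Icc 1 N, a k * φ ^ (N - k) = 0

namespace IntClAux

lemma germ_coe_sum {α β : Type*} [AddCommMonoid β] {l : Filter α} (s : Finset ℕ)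
    (u : ℕ → α → β) :
    ((↑(fun z => ∑ k ∈ s, u k z) : Filter.Germ l β)) = ∑ k ∈ s, (↑(u k) : Filter.Germ l β) := by
  classical
  induction s using Finset.induction with
  | empty => simp; rfl
  | insert _ _ h ih =>
    simp only [Finset.sum_insert h]
    rw [← ih, ← Filter.Germ.coe_add]
    rfl

/-- The bound property with exponent `p` for a germ. -/
def BP (n m : ℕ) (f : Fin m → (Fin n → ℂ) → ℂ) (p : ℕ)
    (x : Filter.Germ (nhds (0 : Fin n → ℂ)) ℂ) : Prop :=
  ∃ C : ℝ, 0 ≤ C ∧ ∃ u : (Fin n → ℂ) → ℂ, x = ↑u ∧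
    ∀ᶠ z in nhds (0 : Fin n → ℂ),
      ‖u z‖ ≤ C * (∑ i, ‖f i z‖) ^ p

variable {n m : ℕ} {f : Fin m → (Fin n → ℂ) → ℂ}

lemma S_nonneg (z : Fin n → ℂ) : (0:ℝ) ≤ ∑ i, ‖f i z‖ :=
  Finset.sum_nonneg fun i _ => norm_nonneg _

lemma BP.add {p : ℕ} {x y : Filter.Germ (nhds (0 : Fin n → ℂ)) ℂ}
    (hx : BP n m f p x) (hy : BP n m f p y) : BP n m f p (x + y) := by
  obtain ⟨C₁, hC₁, u, hu, hub⟩ := hx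
  obtain ⟨C₂, hC₂, v, hv, hvb⟩ := hy
  refine ⟨C₁ + C₂, by linarith, u + v, by rw [hu, hv]; rfl, ?_⟩
  filter_upwards [hub, hvb] with z h1 h2
  have habs : ‖(u + v) z‖ ≤ ‖u z‖ + ‖v z‖ :=
    norm_add_le (u z) (v z)
  calc ‖(u + v) z‖ ≤ ‖u z‖ + ‖v z‖ := habs
    _ ≤ C₁ * (∑ i, ‖f i z‖) ^ p + C₂ * (∑ i, ‖f i z‖) ^ p :=
        add_le_add h1 h2
    _ = (C₁ + C₂) * (∑ i, ‖f i z‖) ^ p := (add_mul _ _ _).symm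

lemma BP.mul {p q : ℕ} {x y : Filter.Germ (nhds (0 : Fin n → ℂ)) ℂ}
    (hx : BP n m f p x) (hy : BP n m f q y) : BP n m f (p + q) (x * y) := by
  obtain ⟨C₁, hC₁, u, hu, hub⟩ := hx
  obtain ⟨C₂, hC₂, v, hv, hvb⟩ := hy
  refine ⟨C₁ * C₂, mul_nonneg hC₁ hC₂, u * v, by rw [hu, hv]; rfl, ?_⟩
  filter_upwards [hub, hvb] with z h1 h2
  have habs : ‖(u * v) z‖ = ‖u z‖ * ‖v z‖ :=
    norm_mul (u z) (v z)
  rw [habs, pow_add]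
  calc ‖u z‖ * ‖v z‖
      ≤ (C₁ * (∑ i, ‖f i z‖) ^ p) * (C₂ * (∑ i, ‖f i z‖) ^ q) :=
        mul_le_mul h1 h2 (norm_nonneg _)
          (mul_nonneg hC₁ (pow_nonneg (S_nonneg z) p))
    _ = C₁ * C₂ * ((∑ i, ‖f i z‖) ^ p * (∑ i, ‖f i z‖) ^ q) := by ring

lemma BP.analytic {x : Filter.Germ (nhds (0 : Fin n → ℂ)) ℂ} (hx : x ∈ HoloGerm n) :
    BP n m f 0 x := by
  obtain ⟨w, hw, rfl⟩ := hx
  refine ⟨‖w 0‖ + 1, by positivity, w, rfl, ?_⟩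
  have h1 : Filter.Tendsto (fun z => ‖w z‖) (nhds (0 : Fin n → ℂ))
      (nhds (‖w 0‖)) :=
    continuous_norm.continuousAt.comp hw.continuousAt
  filter_upwards [h1.eventually_lt_const (lt_add_one _)] with z hz
  simpa using hz.le

lemma BP.gen (i : Fin m) : BP n m f 1 (↑(f i) : Filter.Germ (nhds (0 : Fin n → ℂ)) ℂ) := by
  refine ⟨1, zero_le_one, f i, rfl, Filter.Eventually.of_forall fun z => ?_⟩
  have := Finset.single_le_sum (f := fun j => ‖f j z‖)
    (fun j _ => norm_nonneg _) (Finset.mem_univ i)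
  simpa using this

lemma bp_of_mem_span (hf : ∀ i, AnalyticAt ℂ (f i) 0) {x : HoloGerm n}
    (hx : x ∈ Ideal.span (Set.range fun i => (⟨↑(f i), f i, hf i, rfl⟩ : HoloGerm n))) :
    BP n m f 1 ↑x := by
  induction hx using Submodule.span_induction with
  | mem y hy =>
    obtain ⟨i, rfl⟩ := hy
    exact BP.gen i
  | zero => exact ⟨0, le_refl 0, 0, rfl, Filter.Eventually.of_forall fun z => by simp⟩
  | add a b ha hb iha ihb => exact iha.add ihb
  | smul r y hy ihy =>
    have h0 : BP n m f 0 ↑r := BP.analytic r.2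
    have h1 := h0.mul ihy
    have h2 : ((r • y : HoloGerm n) : Filter.Germ (nhds (0 : Fin n → ℂ)) ℂ) = ↑r * ↑y := by
      rw [smul_eq_mul]; rfl
    rw [h2]
    exact h1

lemma bp_of_mem_pow (hf : ∀ i, AnalyticAt ℂ (f i) 0) (p : ℕ) (x : HoloGerm n)
    (hx : x ∈ (Ideal.span (Set.range fun i => (⟨↑(f i), f i, hf i, rfl⟩ : HoloGerm n))) ^ p) :
    BP n m f p ↑x := by
  induction p generalizing x with
  | zero => exact BP.analytic x.2
  | succ p ih =>
    rw [pow_succ] at hx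
    refine Submodule.mul_induction_on hx (fun a ha b hb => ?_) (fun a b ha hb => ?_)
    · exact (ih a ha).mul (bp_of_mem_span hf hb)
    · exact ha.add hb

lemma key_estimate (N : ℕ) (t v : ℝ) (ht : 0 ≤ t) (hv : 0 ≤ v)
    (c : ℕ → ℝ) (hc : ∀ k, 0 ≤ c k)
    (h : t ^ N ≤ ∑ k ∈ Finset.Icc 1 N, c k * v ^ k * t ^ (N - k)) :
    t ≤ (1 + ∑ k ∈ Finset.Icc 1 N, c k) * v := by
  set M := 1 + ∑ k ∈ Finset.Icc 1 N, c k with hM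
  have hsum : (0:ℝ) ≤ ∑ k ∈ Finset.Icc 1 N, c k := Finset.sum_nonneg fun k _ => hc k
  have hM1 : (1:ℝ) ≤ M := by rw [hM]; linarith
  have hM0 : (0:ℝ) < M := by linarith
  by_contra hcon
  push_neg at hcon
  have ht0 : 0 < t := lt_of_le_of_lt (mul_nonneg hM0.le hv) hcon
  have hv' : v < t / M := (lt_div_iff₀ hM0).2 (by linarith [hcon])
  have hbound : ∀ k ∈ Finset.Icc 1 N, c k * v ^ k * t ^ (N - k) ≤ c k / M * t ^ N := by
    intro k hk
    obtain ⟨hk1, hkN⟩ := Finset.mem_Icc.mp hk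
    have h1 : v ^ k ≤ (t / M) ^ k := pow_le_pow_left₀ hv hv'.le k
    have h2 : (t / M) ^ k = t ^ k / M ^ k := div_pow t M k
    have h3 : t ^ k / M ^ k ≤ t ^ k / M :=
      div_le_div_of_nonneg_left (pow_nonneg ht k) hM0
        (le_self_pow₀ hM1 (by omega))
    have h4 : v ^ k ≤ t ^ k / M := le_trans h1 (h2 ▸ h3)
    have h5 : t ^ k * t ^ (N - k) = t ^ N := by
      rw [← pow_add, Nat.add_sub_cancel' hkN]
    calc c k * v ^ k * t ^ (N - k) ≤ c k * (t ^ k / M) * t ^ (N - k) := by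
          apply mul_le_mul_of_nonneg_right _ (pow_nonneg ht _)
          exact mul_le_mul_of_nonneg_left h4 (hc k)
      _ = c k / M * (t ^ k * t ^ (N - k)) := by ring
      _ = c k / M * t ^ N := by rw [h5]
  have h6 : ∑ k ∈ Finset.Icc 1 N, c k * v ^ k * t ^ (N - k)
      ≤ (∑ k ∈ Finset.Icc 1 N, c k) / M * t ^ N := by
    calc ∑ k ∈ Finset.Icc 1 N, c k * v ^ k * t ^ (N - k)
        ≤ ∑ k ∈ Finset.Icc 1 N, c k / M * t ^ N := Finset.sum_le_sum hbound
      _ = (∑ k ∈ Finset.Icc 1 N, c k) / M * t ^ N := by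
          rw [← Finset.sum_mul, ← Finset.sum_div]
  have h7 : (∑ k ∈ Finset.Icc 1 N, c k) / M < 1 := (div_lt_one hM0).2 (by rw [hM]; linarith)
  have h8 : (0:ℝ) < t ^ N := pow_pos ht0 N
  have h9 : (∑ k ∈ Finset.Icc 1 N, c k) / M * t ^ N < 1 * t ^ N :=
    mul_lt_mul_of_pos_right h7 h8
  linarith

end IntClAux

open IntClAux
theorem integral_closure_size_estimate (n m ν : ℕ) (hν : 0 < ν)
    (φ : (Fin n → ℂ) → ℂ) (hφ : AnalyticAt ℂ φ 0)
    (f : Fin m → (Fin n → ℂ) → ℂ) (hf : ∀ i, AnalyticAt ℂ (f i) 0)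
    (hint : IsIntegralOverIdeal
      ((Ideal.span (Set.range fun i => (⟨↑(f i), f i, hf i, rfl⟩ : HoloGerm n))) ^ ν)
      (⟨↑φ, φ, hφ, rfl⟩ : HoloGerm n)) :
    ∃ C > (0 : ℝ), ∃ r > (0 : ℝ), ∀ z ∈ ball (0 : Fin n → ℂ) r,
      ‖φ z‖ ≤ C * (∑ i, ‖f i z‖) ^ ν := by
  classical
  obtain ⟨N, hN, a, hamem, heq⟩ := hint
  -- bounds for the coefficients
  have hB : ∀ k : ℕ, ∃ C : ℝ, ∃ u : (Fin n → ℂ) → ℂ, 0 ≤ C ∧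
      (1 ≤ k → k ≤ N → (((a k : HoloGerm n) : Filter.Germ (nhds (0 : Fin n → ℂ)) ℂ) = ↑u ∧
        ∀ᶠ z in nhds (0 : Fin n → ℂ),
          ‖u z‖ ≤ C * (∑ i, ‖f i z‖) ^ (ν * k))) := by
    intro k
    by_cases hk : 1 ≤ k ∧ k ≤ N
    · have hmem := hamem k hk.1 hk.2
      rw [← pow_mul] at hmem
      obtain ⟨C, hC, u, hu, hub⟩ := bp_of_mem_pow hf (ν * k) (a k) hmem
      exact ⟨C, u, hC, fun _ _ => ⟨hu, hub⟩⟩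
    · exact ⟨0, 0, le_refl 0, fun h1 h2 => absurd ⟨h1, h2⟩ hk⟩
  choose C u hC hcu using hB
  -- the germ equation, coerced to `Germ`
  have h0 : (((⟨↑φ, φ, hφ, rfl⟩ : HoloGerm n) ^ N
      + ∑ k ∈ Finset.Icc 1 N, a k * (⟨↑φ, φ, hφ, rfl⟩ : HoloGerm n) ^ (N - k) : HoloGerm n)
      : Filter.Germ (nhds (0 : Fin n → ℂ)) ℂ) = 0 := by rw [heq]; rfl
  push_cast at h0
  have hpow : ∀ j : ℕ, ((↑(fun z => φ z ^ j) : Filter.Germ (nhds (0 : Fin n → ℂ)) ℂ))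
      = (↑φ : Filter.Germ (nhds (0 : Fin n → ℂ)) ℂ) ^ j := fun j =>
    map_pow (Filter.Germ.coeRingHom (nhds (0 : Fin n → ℂ))) φ j
  have hsum : ∑ k ∈ Finset.Icc 1 N,
        ((a k : HoloGerm n) : Filter.Germ (nhds (0 : Fin n → ℂ)) ℂ)
          * (↑φ : Filter.Germ (nhds (0 : Fin n → ℂ)) ℂ) ^ (N - k)
      = ↑(fun z => ∑ k ∈ Finset.Icc 1 N, u k z * φ z ^ (N - k)) := by
    rw [germ_coe_sum]
    refine Finset.sum_congr rfl fun k hk => ?_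
    obtain ⟨hk1, hk2⟩ := Finset.mem_Icc.mp hk
    rw [(hcu k hk1 hk2).1, ← hpow (N - k)]
    rfl
  have hEv : ∀ᶠ z in nhds (0 : Fin n → ℂ),
      φ z ^ N + ∑ k ∈ Finset.Icc 1 N, u k z * φ z ^ (N - k) = 0 := by
    have h3 : (↑(fun z => φ z ^ N + ∑ k ∈ Finset.Icc 1 N, u k z * φ z ^ (N - k))
        : Filter.Germ (nhds (0 : Fin n → ℂ)) ℂ) = ↑(fun _ : Fin n → ℂ => (0 : ℂ)) := by
      have h4 : (↑(fun z => φ z ^ N + ∑ k ∈ Finset.Icc 1 N, u k z * φ z ^ (N - k))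
          : Filter.Germ (nhds (0 : Fin n → ℂ)) ℂ)
          = ↑(fun z => φ z ^ N)
            + ↑(fun z => ∑ k ∈ Finset.Icc 1 N, u k z * φ z ^ (N - k)) := rfl
      rw [h4, hpow N, ← hsum]
      rw [h0]
      rfl
    have h5 := Filter.Germ.coe_eq.mp h3
    filter_upwards [h5] with z hz
    exact hz
  have hBnd : ∀ᶠ z in nhds (0 : Fin n → ℂ), ∀ k ∈ Finset.Icc 1 N,
      ‖u k z‖ ≤ C k * (∑ i, ‖f i z‖) ^ (ν * k) :=
    (Filter.eventually_all_finset _).2 fun k hk =>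
      (hcu k (Finset.mem_Icc.mp hk).1 (Finset.mem_Icc.mp hk).2).2
  obtain ⟨r, hr, hball⟩ := Metric.eventually_nhds_iff_ball.mp (hEv.and hBnd)
  have hCsum : (0:ℝ) ≤ ∑ k ∈ Finset.Icc 1 N, C k := Finset.sum_nonneg fun k _ => hC k
  refine ⟨1 + ∑ k ∈ Finset.Icc 1 N, C k, by linarith, r, hr, fun z hz => ?_⟩
  obtain ⟨heqz, hbz⟩ := hball z hz
  have hs0 : (0:ℝ) ≤ ∑ i, ‖f i z‖ := S_nonneg z
  have hT : ‖φ z‖ ^ N ≤ ∑ k ∈ Finset.Icc 1 N,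
      C k * ((∑ i, ‖f i z‖) ^ ν) ^ k * ‖φ z‖ ^ (N - k) := by
    have h5 : φ z ^ N = -∑ k ∈ Finset.Icc 1 N, u k z * φ z ^ (N - k) :=
      eq_neg_of_add_eq_zero_left heqz
    calc ‖φ z‖ ^ N = ‖φ z ^ N‖ := (norm_pow _ _).symm
      _ = ‖∑ k ∈ Finset.Icc 1 N, u k z * φ z ^ (N - k)‖ := by
          rw [h5, norm_neg]
      _ ≤ ∑ k ∈ Finset.Icc 1 N, ‖u k z * φ z ^ (N - k)‖ :=
          norm_sum_le _ _
      _ ≤ ∑ k ∈ Finset.Icc 1 N,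
          C k * ((∑ i, ‖f i z‖) ^ ν) ^ k * ‖φ z‖ ^ (N - k) := by
          refine Finset.sum_le_sum fun k hk => ?_
          rw [norm_mul, norm_pow, ← pow_mul]
          exact mul_le_mul_of_nonneg_right (hbz k hk)
            (pow_nonneg (norm_nonneg _) _)
  have hkey := key_estimate N (‖φ z‖) ((∑ i, ‖f i z‖) ^ ν)
    (norm_nonneg _) (pow_nonneg hs0 ν) C hC hT
  exact hkey
end
end

section
/- Let p ∈ ℂ[z] be a monic polynomial of degree s in one variable with roots r₁,…,r_s in a disk D. For any δ with 0 < δ < 1/s, the function z ↦ 1/|p(z)|^δ is integrable on D. (This is the one-variable slice estimate used to prove integrability of 1/|F|^δ via the Weierstrass preparation theorem.) -/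
/-!
STATEMENT 3: If p(z) = ∏_{j=1}^s (z − r_j) is a monic polynomial of degree s with
roots in a disk D ⊆ ℂ, and 0 < δ < 1/s, then z ↦ 1/|p(z)|^δ is Lebesgue integrable
on D.
-/

noncomputable section
open Metric MeasureTheory

/-- Integrability of `|z-a|^{-t}` on a ball around `a`, for `0 ≤ t < 2`. -/
lemma aux_integrableOn_rpow_neg (a : ℂ) (R t : ℝ) (ht0 : 0 ≤ t) (ht2 : t < 2) :
    IntegrableOn (fun z : ℂ => ‖z - a‖ ^ (-t)) (ball a R) volume := by
  rcases le_or_gt R 0 with hR | hR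
  · rw [ball_eq_empty.2 hR]
    exact integrableOn_empty
  have hmeas : Measurable fun z : ℂ => ‖z - a‖ ^ (-t) := by
    have hc : Continuous fun z : ℂ => ‖z - a‖ ^ t :=
      (Real.continuous_rpow_const ht0).comp
        (continuous_norm.comp (continuous_id.sub continuous_const))
    have := hc.measurable.inv
    convert this using 1
    funext z
    rw [Real.rpow_neg (norm_nonneg _)]; rfl
  refine ⟨hmeas.aestronglyMeasurable, ?_⟩
  rw [hasFiniteIntegral_iff_ofReal
    (Filter.Eventually.of_forall fun z => Real.rpow_nonneg (norm_nonneg _) _)]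
  -- dyadic annuli
  set A : ℕ → Set ℂ := fun k => ball a (R / 2 ^ k) \ ball a (R / 2 ^ (k + 1)) with hA
  have hcover : ball a R ⊆ {a} ∪ ⋃ k, A k := by
    intro z hz
    rcases eq_or_ne z a with rfl | hz0
    · exact Or.inl rfl
    right
    have hd : 0 < dist z a := dist_pos.2 hz0
    have hdR : dist z a < R := mem_ball.1 hz
    have hexists : ∃ n : ℕ, R / 2 ^ (n + 1) ≤ dist z a := by
      obtain ⟨n, hn⟩ := exists_pow_lt_of_lt_one (div_pos hd hR) (by norm_num : (1:ℝ)/2 < 1)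
      refine ⟨n, ?_⟩
      have h1 : R / 2 ^ n < dist z a := by
        have h0 : (1:ℝ)/2^n < dist z a / R := by rwa [div_pow, one_pow] at hn
        calc R / 2 ^ n = R * (1/2^n) := by ring
          _ < R * (dist z a / R) := by exact mul_lt_mul_of_pos_left h0 hR
          _ = dist z a := by field_simp
      have h2 : R / 2 ^ (n+1) ≤ R / 2 ^ n := by
        gcongr
        · exact one_le_two
        · exact Nat.le_succ n
      linarith
    set k := Nat.find hexists with hk
    have hk1 : R / 2 ^ (k + 1) ≤ dist z a := Nat.find_spec hexists
    have hk2 : dist z a < R / 2 ^ k := by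
      rcases Nat.eq_zero_or_pos k with h0 | hpos
      · rw [h0]; simpa using hdR
      · have hmin := Nat.find_min hexists (Nat.sub_lt hpos one_pos)
        push_neg at hmin
        have : k - 1 + 1 = k := Nat.succ_pred_eq_of_pos hpos
        rwa [this] at hmin
    exact Set.mem_iUnion.2 ⟨k, mem_ball.2 hk2, fun h => absurd (mem_ball.1 h) (not_lt.2 hk1)⟩
  set g : ℕ → ℝ := fun k => (R / 2 ^ (k + 1)) ^ (-t) * ((R / 2 ^ k) ^ 2 * Real.pi) with hg
  have hgpos : ∀ k, 0 ≤ g k := fun k => by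
    have : (0:ℝ) < R / 2 ^ (k+1) := by positivity
    positivity
  have hratio : ∀ k, g (k + 1) = 2 ^ (t - 2) * g k := by
    intro k
    have hx : (0:ℝ) < R / 2 ^ (k + 1) := by positivity
    have h1 : (R / 2 ^ (k + 2)) ^ (-t) = (R / 2 ^ (k + 1)) ^ (-t) * 2 ^ t := by
      have : R / 2 ^ (k + 2) = (R / 2 ^ (k + 1)) / 2 := by ring
      rw [this, Real.div_rpow hx.le (by norm_num : (0:ℝ) ≤ 2), Real.rpow_neg (by norm_num : (0:ℝ) ≤ 2),
        div_eq_mul_inv, inv_inv]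
    have h2 : (R / 2 ^ (k + 1)) ^ 2 = (R / 2 ^ k) ^ 2 / 4 := by
      have : R / 2 ^ (k + 1) = (R / 2 ^ k) / 2 := by ring
      rw [this]; ring
    have h3 : (2:ℝ) ^ (t - 2) = 2 ^ t / 4 := by
      rw [Real.rpow_sub (by norm_num : (0:ℝ) < 2), Real.rpow_two]; norm_num
    simp only [hg]
    rw [h1, h2, h3]
    ring
  have hsummable : Summable g := by
    apply summable_of_ratio_norm_eventually_le (r := 2 ^ (t - 2))
    · exact Real.rpow_lt_one_of_one_lt_of_neg one_lt_two (by linarith)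
    · filter_upwards with k
      rw [Real.norm_of_nonneg (hgpos _), Real.norm_of_nonneg (hgpos _), hratio]
  have hbound : ∀ k, (∫⁻ z in A k, ENNReal.ofReal (‖z - a‖ ^ (-t))) ≤
      ENNReal.ofReal (g k) := by
    intro k
    have hAk : MeasurableSet (A k) := measurableSet_ball.diff measurableSet_ball
    calc (∫⁻ z in A k, ENNReal.ofReal (‖z - a‖ ^ (-t)))
        ≤ ∫⁻ _ in A k, ENNReal.ofReal ((R / 2 ^ (k + 1)) ^ (-t)) := by
          apply setLIntegral_mono measurable_const
          intro z hz
          apply ENNReal.ofReal_le_ofReal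
          have hdz : R / 2 ^ (k + 1) ≤ dist z a := le_of_not_gt fun h => hz.2 (mem_ball.2 h)
          have : ‖z - a‖ = dist z a := (Complex.dist_eq z a).symm
          rw [this]
          exact Real.rpow_le_rpow_of_nonpos (by positivity) hdz (by linarith)
      _ = ENNReal.ofReal ((R / 2 ^ (k + 1)) ^ (-t)) * volume (A k) := setLIntegral_const _ _
      _ ≤ ENNReal.ofReal ((R / 2 ^ (k + 1)) ^ (-t)) * volume (ball a (R / 2 ^ k)) := by
          exact mul_le_mul_right (measure_mono Set.diff_subset) _
      _ = ENNReal.ofReal ((R / 2 ^ (k + 1)) ^ (-t)) *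
            ENNReal.ofReal ((R / 2 ^ k) ^ 2 * Real.pi) := by
          rw [Complex.volume_ball, ENNReal.ofReal_mul (by positivity),
            ENNReal.ofReal_pow (by positivity), ← NNReal.coe_real_pi,
            ENNReal.ofReal_coe_nnreal]
      _ = ENNReal.ofReal (g k) := by
          rw [← ENNReal.ofReal_mul (by positivity)]
  calc (∫⁻ z in ball a R, ENNReal.ofReal (‖z - a‖ ^ (-t)))
      ≤ ∫⁻ z in {a} ∪ ⋃ k, A k, ENNReal.ofReal (‖z - a‖ ^ (-t)) :=
        lintegral_mono_set hcover
    _ ≤ (∫⁻ z in ({a} : Set ℂ), ENNReal.ofReal (‖z - a‖ ^ (-t))) +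
          ∫⁻ z in ⋃ k, A k, ENNReal.ofReal (‖z - a‖ ^ (-t)) :=
        lintegral_union_le _ _ _
    _ ≤ 0 + ∑' k, ∫⁻ z in A k, ENNReal.ofReal (‖z - a‖ ^ (-t)) := by
        gcongr
        · exact le_of_eq (setLIntegral_measure_zero _ _ (measure_singleton a))
        · exact lintegral_iUnion_le _ _
    _ ≤ 0 + ∑' k, ENNReal.ofReal (g k) := by
        gcongr with k
        exact hbound k
    _ = ENNReal.ofReal (∑' k, g k) := by
        rw [zero_add, ENNReal.ofReal_tsum_of_nonneg hgpos hsummable]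
    _ < ⊤ := ENNReal.ofReal_lt_top

theorem integrable_inv_abs_monic_poly_rpow (s : ℕ) (r : Fin s → ℂ)
    (c : ℂ) (R : ℝ) (hroots : ∀ j, r j ∈ ball c R)
    (δ : ℝ) (hδ0 : 0 < δ) (hδ : δ < 1 / s) :
    IntegrableOn (fun z : ℂ => 1 / ‖∏ j, (z - r j)‖ ^ δ)
      (ball c R) volume := by
  have hs : 0 < s := by
    by_contra h
    push_neg at h
    interval_cases s
    simp at hδ
    linarith
  have hs' : (0:ℝ) < s := Nat.cast_pos.2 hs
  set t : ℝ := (s : ℝ) * δ with hts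
  have ht0 : 0 ≤ t := by positivity
  have ht1 : t < 1 := by
    have h : δ < 1 / (s:ℝ) := by exact_mod_cast hδ
    calc t = (s:ℝ) * δ := hts
      _ < (s:ℝ) * (1 / s) := by exact mul_lt_mul_of_pos_left h hs'
      _ = 1 := by field_simp
  have ht2 : t < 2 := by linarith
  -- the dominating function
  set G : ℂ → ℝ := fun z => ∑ j, ‖z - r j‖ ^ (-t) with hG
  have hGint : IntegrableOn G (ball c R) volume := by
    apply integrable_finset_sum
    intro j _
    have hsub : ball c R ⊆ ball (r j) (2 * R) := by
      intro z hz
      have h1 : dist z c < R := mem_ball.1 hz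
      have h2 : dist c (r j) < R := by
        rw [dist_comm]; exact mem_ball.1 (hroots j)
      calc dist z (r j) ≤ dist z c + dist c (r j) := dist_triangle _ _ _
        _ < 2 * R := by linarith
    exact (aux_integrableOn_rpow_neg (r j) (2 * R) t ht0 ht2).mono_set hsub
  -- pointwise bound
  have key : ∀ z : ℂ, 1 / ‖∏ j, (z - r j)‖ ^ δ ≤ G z := by
    intro z
    set a : Fin s → ℝ := fun j => ‖z - r j‖ with ha
    have habs : ‖∏ j, (z - r j)‖ = ∏ j, a j := norm_prod _ _
    have hRHSnn : ∀ j, 0 ≤ a j ^ (-t) := fun j => Real.rpow_nonneg (norm_nonneg _) _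
    by_cases hzero : ∃ j, a j = 0
    · obtain ⟨j, hj⟩ := hzero
      rw [habs, Finset.prod_eq_zero (Finset.mem_univ j) hj, Real.zero_rpow hδ0.ne', div_zero]
      exact Finset.sum_nonneg fun j _ => hRHSnn j
    · push_neg at hzero
      have hapos : ∀ j, 0 < a j := fun j =>
        lt_of_le_of_ne (norm_nonneg _) (Ne.symm (hzero j))
      have h1 : 1 / ‖∏ j, (z - r j)‖ ^ δ = ∏ j, a j ^ (-δ) := by
        rw [habs, Real.finset_prod_rpow _ _ (fun j _ => (hapos j).le) (-δ),
          Real.rpow_neg (Finset.prod_nonneg fun j _ => (hapos j).le), one_div]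
      have h2 : ∀ j, a j ^ (-δ) = (a j ^ (-t)) ^ ((1:ℝ) / s) := by
        intro j
        rw [← Real.rpow_mul (hapos j).le]
        congr 1
        field_simp [hts]
        ring
      have hsum1 : ∑ _j : Fin s, (1:ℝ) / s = 1 := by
        rw [Finset.sum_const, Finset.card_univ, Fintype.card_fin, nsmul_eq_mul]
        field_simp
      calc 1 / ‖∏ j, (z - r j)‖ ^ δ
          = ∏ j, (a j ^ (-t)) ^ ((1:ℝ) / s) := by
            rw [h1]; exact Finset.prod_congr rfl fun j _ => h2 j
        _ ≤ ∑ j, (1 / (s:ℝ)) * a j ^ (-t) :=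
            Real.geom_mean_le_arith_mean_weighted Finset.univ _ _
              (fun _ _ => by positivity) hsum1 (fun j _ => hRHSnn j)
        _ ≤ ∑ j, a j ^ (-t) := by
            refine Finset.sum_le_sum fun j _ => ?_
            apply mul_le_of_le_one_left (hRHSnn j)
            rw [div_le_one hs']
            exact_mod_cast hs
  -- measurability
  have hmeas : Measurable fun z : ℂ => 1 / ‖∏ j, (z - r j)‖ ^ δ := by
    have hcont : Continuous fun z : ℂ => ‖∏ j, (z - r j)‖ ^ δ :=
      (Real.continuous_rpow_const hδ0.le).comp
        (continuous_norm.comp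
          (continuous_finset_prod _ fun j _ => continuous_id.sub continuous_const))
    simp only [one_div]; exact hcont.measurable.inv
  apply Integrable.mono' hGint hmeas.aestronglyMeasurable
  filter_upwards with z
  rw [Real.norm_of_nonneg (by positivity)]
  exact key z
end
end
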